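/- (Theorem 1, sufficient decrease, convex case.) Fix a base point w₀ ∈ ℝ^d, μ > 0, γ ∈ [0,1) and B ≥ 1. Suppose each F_k is convex with L-Lipschitz gradient, f has L-Lipschitz gradient, and the local functions are B-locally dissimilar at w₀, i.e. Σ_{k=1}^N p_k ‖∇F_k(w₀)‖² ≤ B² ‖∇f(w₀)‖². Let k_1, …, k_K be i.i.d. random device indices, each taking value k with probability p_k; set g = (1/K) Σ_{i=1}^K ∇F_{k_i}(w₀); and let j be a further random device index with the same distribution, independent of (k_1, …, k_K). For each device m and each realization of g, let w_m(g) be a γ-inexact minimizer of the FedDANE subproblem P_m with base point w₀, gradient estimate g and penalty μ. Define ρ = (2 − 3γ)/(2μ) − (2L(1+γ)² + 3L)/(2μ²) − (B² − 1)((L(1+γ)² + L)/μ² + γ/μ). If ρ > 0, then E[f(w_j(g))] ≤ f(w₀) − ρ ‖∇f(w₀)‖², where the expectation is over the random indices (k_1, …, k_K) and j. -/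

import Mathlib

open scoped RealInnerProductSpace

open InnerProductSpace

section AuxAnalysis

variable {E : Type*} [NormedAddCommGroup E] [InnerProductSpace ℝ E] [CompleteSpace E]

lemma fd_inner_grad (f : E → ℝ) (x v : E) : fderiv ℝ f x v = ⟪gradient f x, v⟫ := by
  rw [gradient, toDual_symm_apply]

lemma fd_quad (w₀ u : E) (μ : ℝ) :
    HasGradientAt (fun v : E => μ/2 * ‖v - w₀‖ ^ 2) (μ • (u - w₀)) u := by
  have h1 : HasFDerivAt (fun v : E => v - w₀) (ContinuousLinearMap.id ℝ E) u :=
    (hasFDerivAt_id u).sub_const w₀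
  have h2 := (h1.inner ℝ h1).const_mul (μ/2)
  have heq : (fun v : E => μ / 2 * ⟪v - w₀, v - w₀⟫) = fun v : E => μ/2 * ‖v - w₀‖ ^ 2 := by
    funext v; rw [real_inner_self_eq_norm_sq]
  rw [heq] at h2
  have key : ((μ / 2) • (fderivInnerCLM ℝ (u - w₀, u - w₀)).comp
      ((ContinuousLinearMap.id ℝ E).prod (ContinuousLinearMap.id ℝ E)))
      = InnerProductSpace.toDual ℝ E (μ • (u - w₀)) := by
    apply ContinuousLinearMap.ext; intro h
    simp only [ContinuousLinearMap.smul_apply, ContinuousLinearMap.coe_comp',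
      Function.comp_apply, ContinuousLinearMap.prod_apply, ContinuousLinearMap.coe_id', id_eq,
      fderivInnerCLM_apply, toDual_apply_apply, real_inner_smul_left, smul_eq_mul,
      real_inner_comm (u - w₀) h]
    ring
  rw [key] at h2
  exact hasGradientAt_iff_hasFDerivAt.mpr h2

lemma fd_lin (w₀ u c : E) :
    HasGradientAt (fun v : E => ⟪c, v - w₀⟫) c u := by
  have h : HasFDerivAt (fun v : E => ⟪c, v - w₀⟫) (InnerProductSpace.toDual ℝ E c) u := by
    have h1 : HasFDerivAt (fun v : E => v - w₀) (ContinuousLinearMap.id ℝ E) u :=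
      (hasFDerivAt_id u).sub_const w₀
    have h2 := (InnerProductSpace.toDual ℝ E c).hasFDerivAt.comp u h1
    simpa [Function.comp_def, toDual_apply_apply] using h2
  exact hasGradientAt_iff_hasFDerivAt.mpr h

lemma fd_P {u : E} (Fm : E → ℝ) (hFm : DifferentiableAt ℝ Fm u) (c w₀ : E) (μ : ℝ) :
    HasGradientAt (fun v : E => Fm v + ⟪c, v - w₀⟫ + μ/2 * ‖v - w₀‖ ^ 2)
      (gradient Fm u + c + μ • (u - w₀)) u := by
  have hA := hFm.hasGradientAt
  have hB := fd_lin w₀ u c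
  have hC := fd_quad w₀ u μ
  have := (hA.hasFDerivAt.add hB.hasFDerivAt).add hC.hasFDerivAt
  rw [← map_add, ← map_add] at this
  exact hasGradientAt_iff_hasFDerivAt.mpr this

lemma min_grad_zero {h : E → ℝ} {g u : E} (hg : HasGradientAt h g u)
    (hmin : ∀ v, h u ≤ h v) : g = 0 := by
  have hloc : IsLocalMin h u := Filter.Eventually.of_forall hmin
  have := hloc.hasFDerivAt_eq_zero hg.hasFDerivAt
  have h2 := congrArg (InnerProductSpace.toDual ℝ E).symm this
  simpa using h2

lemma convex_first_order {G : E → ℝ} (hconv : ConvexOn ℝ Set.univ G)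
    (hdiff : Differentiable ℝ G) (x y : E) :
    G x + ⟪gradient G x, y - x⟫ ≤ G y := by
  set φ : ℝ → ℝ := fun t => G (x + t • (y - x)) with hφ
  have hφconv : ConvexOn ℝ Set.univ φ := by
    have := hconv.comp_affineMap (AffineMap.lineMap x y)
    simp only [Set.preimage_univ] at this
    have e : φ = G ∘ ⇑(AffineMap.lineMap x y) := by
      funext t
      simp only [φ, Function.comp_apply, AffineMap.lineMap_apply_module]
      congr 1
      module
    rw [e]
    exact this
  have hder : HasDerivAt φ ⟪gradient G x, y - x⟫ 0 := by
    have hline : HasDerivAt (fun t : ℝ => x + t • (y - x)) (y - x) 0 := by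
      simpa using ((hasDerivAt_id (0:ℝ)).smul_const (y - x)).const_add x
    have := (hdiff (x + (0:ℝ) • (y - x))).hasFDerivAt.comp_hasDerivAt 0 hline
    simp only [zero_smul, add_zero] at this
    rw [fd_inner_grad] at this
    exact this
  have hslope := hφconv.le_slope_of_hasDerivAt (Set.mem_univ 0) (Set.mem_univ 1)
    one_pos hder
  rw [slope_def_field] at hslope
  have h1 : φ 1 = G y := by
    simp only [φ, one_smul]
    congr 1
    abel
  have h0 : φ 0 = G x := by simp [φ]
  rw [h1, h0, sub_zero, div_one] at hslope
  linarith

lemma grad_mono {G : E → ℝ} (hconv : ConvexOn ℝ Set.univ G)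
    (hdiff : Differentiable ℝ G) (x y : E) :
    0 ≤ ⟪gradient G x - gradient G y, x - y⟫ := by
  have h1 := convex_first_order hconv hdiff x y
  have h2 := convex_first_order hconv hdiff y x
  have e1 : ⟪gradient G x - gradient G y, x - y⟫
      = -(⟪gradient G x, y - x⟫ + ⟪gradient G y, x - y⟫) := by
    rw [inner_sub_left]
    have : (y - x) = -(x - y) := by abel
    rw [this, inner_neg_right]
    ring
  rw [e1]
  linarith

lemma descent_lemma {f : E → ℝ} (hdiff : Differentiable ℝ f) {L : ℝ} (hL : 0 ≤ L)
    (hlip : ∀ a b, ‖gradient f a - gradient f b‖ ≤ L * ‖a - b‖) (x y : E) :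
    f y ≤ f x + ⟪gradient f x, y - x⟫ + L * ‖y - x‖ ^ 2 := by
  have key : ‖f y - f x - (fderiv ℝ f x) (y - x)‖ ≤ (L * ‖y - x‖) * ‖y - x‖ := by
    apply Convex.norm_image_sub_le_of_norm_fderiv_le' (s := segment ℝ x y)
      (fun z _ => hdiff z) ?_ (convex_segment x y) (left_mem_segment ℝ x y)
      (right_mem_segment ℝ x y)
    intro z hz
    have hz' : ‖z - x‖ ≤ ‖y - x‖ := by
      obtain ⟨a, b, ha, hb, hab, rfl⟩ := hz
      have hax : a = 1 - b := by linarith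
      have : a • x + b • y - x = b • (y - x) := by rw [hax]; module
      rw [this, norm_smul]
      simp only [Real.norm_eq_abs, abs_of_nonneg hb]
      nlinarith [norm_nonneg (y - x)]
    have hfd : fderiv ℝ f z - fderiv ℝ f x
        = InnerProductSpace.toDual ℝ E (gradient f z - gradient f x) := by
      rw [map_sub, gradient, gradient,
        (InnerProductSpace.toDual ℝ E).apply_symm_apply,
        (InnerProductSpace.toDual ℝ E).apply_symm_apply]
    rw [hfd]
    rw [(InnerProductSpace.toDual ℝ E).norm_map]
    calc ‖gradient f z - gradient f x‖ ≤ L * ‖z - x‖ := hlip z x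
      _ ≤ L * ‖y - x‖ := mul_le_mul_of_nonneg_left hz' hL
  rw [fd_inner_grad] at key
  have := abs_le.mp (by rwa [Real.norm_eq_abs] at key)
  nlinarith [this.2]

end AuxAnalysis

lemma weight_sum {N K : ℕ} (p : Fin N → ℝ) (hpsum : ∑ k, p k = 1) :
    ∑ σ : Fin K → Fin N, ∏ i, p (σ i) = 1 := by
  have hps := Finset.prod_univ_sum (fun _ : Fin K => (Finset.univ : Finset (Fin N)))
    (fun _ k => p k)
  rw [Fintype.piFinset_univ] at hps
  rw [← hps]
  simp [hpsum]

lemma marginal_sum {N K : ℕ} (p : Fin N → ℝ) (hpsum : ∑ k, p k = 1) (h : Fin N → ℝ) :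
    ∑ σ : Fin K → Fin N, (∏ i, p (σ i)) * (∑ i, h (σ i))
      = (K : ℝ) * ∑ k, p k * h k := by
  have step : ∀ i₀ : Fin K,
      ∑ σ : Fin K → Fin N, (∏ i, p (σ i)) * h (σ i₀) = ∑ k, p k * h k := by
    intro i₀
    have e1 : ∀ σ : Fin K → Fin N, (∏ i, p (σ i)) * h (σ i₀)
        = ∏ i, (if i = i₀ then p (σ i) * h (σ i) else p (σ i)) := by
      intro σ
      rw [← Finset.mul_prod_erase Finset.univ
          (fun i => if i = i₀ then p (σ i) * h (σ i) else p (σ i)) (Finset.mem_univ i₀),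
        ← Finset.mul_prod_erase Finset.univ (fun i => p (σ i)) (Finset.mem_univ i₀)]
      simp only [if_pos rfl]
      rw [Finset.prod_congr rfl (fun j hj => if_neg (Finset.mem_erase.mp hj).1)]
      simp only [if_true]
      ring
    simp_rw [e1]
    have hps := Finset.prod_univ_sum (fun _ : Fin K => (Finset.univ : Finset (Fin N)))
      (fun i k => if i = i₀ then p k * h k else p k)
    rw [Fintype.piFinset_univ] at hps
    rw [← hps]
    have e2 : ∀ i : Fin K, (∑ k, if i = i₀ then p k * h k else p k)
        = if i = i₀ then ∑ k, p k * h k else 1 := by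
      intro i
      by_cases hi : i = i₀ <;> simp [hi, hpsum]
    rw [Finset.prod_congr rfl (fun i _ => e2 i),
      ← Finset.mul_prod_erase Finset.univ _ (Finset.mem_univ i₀)]
    simp only [if_pos rfl]
    rw [Finset.prod_congr rfl (fun j hj => if_neg (Finset.mem_erase.mp hj).1)]
    simp
  calc ∑ σ : Fin K → Fin N, (∏ i, p (σ i)) * (∑ i, h (σ i))
      = ∑ σ : Fin K → Fin N, ∑ i, (∏ j, p (σ j)) * h (σ i) := by
        simp_rw [Finset.mul_sum]
    _ = ∑ i : Fin K, ∑ σ : Fin K → Fin N, (∏ j, p (σ j)) * h (σ i) := Finset.sum_comm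
    _ = ∑ _i : Fin K, ∑ k, p k * h k := Finset.sum_congr rfl (fun i _ => step i)
    _ = (K : ℝ) * ∑ k, p k * h k := by simp [mul_comm]
set_option maxHeartbeats 2000000 in
/-- Theorem 1, sufficient decrease, convex case.  Each `F k` is
convex with `L`-Lipschitz gradient, `f` has `L`-Lipschitz gradient, and the local
functions are `B`-locally dissimilar at `w₀`.  Sample `K` i.i.d. device indices
(expectation = sum over `σ : Fin K → Fin N` with weight `∏ i, p (σ i)`), set
`gs σ = (1/K) ∑ i, ∇F_{σ i}(w₀)`, and sample an independent device `j` with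
probability `p j`.  For each device `m` and each realization `σ`, `w m σ` is a
`γ`-inexact minimizer of the FedDANE subproblem with gradient estimate `gs σ`.
If `ρ = (2-3γ)/(2μ) - (2L(1+γ)²+3L)/(2μ²) - (B²-1)((L(1+γ)²+L)/μ² + γ/μ) > 0`,
then `E[f(w_j(g))] ≤ f(w₀) - ρ ‖∇f(w₀)‖²`. -/
theorem feddane_sufficient_decrease_convex {d N K : ℕ} (hK : 0 < K)
    (F : Fin N → EuclideanSpace ℝ (Fin d) → ℝ) (hF : ∀ k, ContDiff ℝ 1 (F k))
    (p : Fin N → ℝ) (hp : ∀ k, 0 ≤ p k) (hpsum : ∑ k, p k = 1)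
    (f : EuclideanSpace ℝ (Fin d) → ℝ) (hf : f = fun w => ∑ k, p k * F k w)
    (w₀ : EuclideanSpace ℝ (Fin d)) (μ γ L B : ℝ)
    (hμ : 0 < μ) (hγ0 : 0 ≤ γ) (hγ1 : γ < 1) (hL : 0 ≤ L) (hB : 1 ≤ B)
    (hconv : ∀ k, ConvexOn ℝ Set.univ (F k))
    (hFlip : ∀ k x y, ‖gradient (F k) x - gradient (F k) y‖ ≤ L * ‖x - y‖)
    (hflip : ∀ x y, ‖gradient f x - gradient f y‖ ≤ L * ‖x - y‖)
    (hdissim : ∑ k, p k * ‖gradient (F k) w₀‖ ^ 2 ≤ B ^ 2 * ‖gradient f w₀‖ ^ 2)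
    (gs : (Fin K → Fin N) → EuclideanSpace ℝ (Fin d))
    (hgs : gs = fun σ => (1 / (K : ℝ)) • ∑ i, gradient (F (σ i)) w₀)
    (P : Fin N → EuclideanSpace ℝ (Fin d) → EuclideanSpace ℝ (Fin d) → ℝ)
    (hP : P = fun m gv v =>
      F m v + ⟪gv - gradient (F m) w₀, v - w₀⟫ + μ / 2 * ‖v - w₀‖ ^ 2)
    (w wbar : Fin N → (Fin K → Fin N) → EuclideanSpace ℝ (Fin d))
    (hmin : ∀ m σ v, P m (gs σ) (wbar m σ) ≤ P m (gs σ) v)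
    (hinexact : ∀ m σ, ‖w m σ - wbar m σ‖ ≤ γ * ‖wbar m σ - w₀‖)
    (ρ : ℝ)
    (hρ : ρ = (2 - 3 * γ) / (2 * μ) - (2 * L * (1 + γ) ^ 2 + 3 * L) / (2 * μ ^ 2) -
      (B ^ 2 - 1) * ((L * (1 + γ) ^ 2 + L) / μ ^ 2 + γ / μ))
    (hρpos : 0 < ρ) :
    (∑ σ : Fin K → Fin N, ∑ j : Fin N,
        ((∏ i, p (σ i)) * p j) * f (w j σ)) ≤
      f w₀ - ρ * ‖gradient f w₀‖ ^ 2 := by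
  have hμ' : (0:ℝ) < μ⁻¹ := inv_pos.mpr hμ
  have hKpos : (0:ℝ) < (K:ℝ) := by exact_mod_cast hK
  have hFdiff : ∀ k, Differentiable ℝ (F k) := fun k => (hF k).differentiable one_ne_zero
  have hfdiff : Differentiable ℝ f := by
    rw [hf]
    exact Differentiable.fun_sum (fun k _ => (hFdiff k).const_mul (p k))
  -- gradient of f at w₀
  have hgradf : gradient f w₀ = ∑ k, p k • gradient (F k) w₀ := by
    have hfd : HasFDerivAt f (∑ k, p k •
        (InnerProductSpace.toDual ℝ (EuclideanSpace ℝ (Fin d)) (gradient (F k) w₀))) w₀ := by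
      rw [hf]
      exact HasFDerivAt.fun_sum (fun k _ =>
        ((hFdiff k w₀).hasGradientAt.hasFDerivAt.const_mul (p k)))
    have hg := hasFDerivAt_iff_hasGradientAt.mp hfd
    rw [hg.gradient, map_sum]
    exact Finset.sum_congr rfl fun k _ => by
      rw [map_smul, LinearIsometryEquiv.symm_apply_apply]
  -- optimality condition
  have hopt : ∀ m σ, gradient (F m) (wbar m σ) + (gs σ - gradient (F m) w₀)
      + μ • (wbar m σ - w₀) = 0 := by
    intro m σ
    have hPg := fd_P (F m) ((hFdiff m) (wbar m σ)) (gs σ - gradient (F m) w₀) w₀ μ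
    apply min_grad_zero hPg
    intro u
    have h := hmin m σ u
    rw [hP] at h
    exact h
  -- pointwise key bound
  have key : ∀ m σ, f (w m σ) ≤ f w₀ - μ⁻¹ * ⟪gradient f w₀, gs σ⟫
      + ((L * μ⁻¹^2 + γ * μ⁻¹)/2) * (‖gradient f w₀‖^2 + ‖gs σ‖^2)
      + (L * (1+γ)^2 * μ⁻¹^2) * ‖gs σ‖^2 := by
    intro m σ
    have heq : μ • (wbar m σ - w₀)
        = -(gs σ + (gradient (F m) (wbar m σ) - gradient (F m) w₀)) := by
      have h0 := eq_neg_of_add_eq_zero_right (hopt m σ)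
      rw [h0]
      abel
    have hΔle : ‖gradient (F m) (wbar m σ) - gradient (F m) w₀‖ ≤ L * ‖wbar m σ - w₀‖ :=
      hFlip m (wbar m σ) w₀
    have hmono : 0 ≤ ⟪gradient (F m) (wbar m σ) - gradient (F m) w₀, wbar m σ - w₀⟫ :=
      grad_mono (hconv m) (hFdiff m) (wbar m σ) w₀
    -- bound on ‖wbar - w₀‖
    have hwb : ‖wbar m σ - w₀‖ ≤ μ⁻¹ * ‖gs σ‖ := by
      have h1 : μ * ‖wbar m σ - w₀‖^2 = ⟪μ • (wbar m σ - w₀), wbar m σ - w₀⟫ := by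
        rw [real_inner_smul_left, real_inner_self_eq_norm_sq]
      rw [heq, inner_neg_left, inner_add_left] at h1
      have hcs : ⟪gs σ, wbar m σ - w₀⟫ ≤ ‖gs σ‖ * ‖wbar m σ - w₀‖ := real_inner_le_norm _ _
      have hcs2 : -⟪gs σ, wbar m σ - w₀⟫ ≤ ‖gs σ‖ * ‖wbar m σ - w₀‖ := by
        have := real_inner_le_norm (gs σ) (w₀ - wbar m σ)
        rw [show w₀ - wbar m σ = -(wbar m σ - w₀) by abel, inner_neg_right,
          norm_neg] at this
        linarith
      have h2 : μ * ‖wbar m σ - w₀‖^2 ≤ ‖gs σ‖ * ‖wbar m σ - w₀‖ := by linarith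
      rcases eq_or_lt_of_le (norm_nonneg (wbar m σ - w₀)) with h0 | hpos
      · rw [← h0]; positivity
      · have h3 : μ * ‖wbar m σ - w₀‖ ≤ ‖gs σ‖ := by nlinarith
        calc ‖wbar m σ - w₀‖ = μ⁻¹ * (μ * ‖wbar m σ - w₀‖) := by
              field_simp
          _ ≤ μ⁻¹ * ‖gs σ‖ := mul_le_mul_of_nonneg_left h3 hμ'.le
    have hwmwb : ‖w m σ - wbar m σ‖ ≤ γ * ‖wbar m σ - w₀‖ := hinexact m σ
    have hwm : ‖w m σ - w₀‖ ≤ (1+γ) * (μ⁻¹ * ‖gs σ‖) := by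
      have he : w m σ - w₀ = (w m σ - wbar m σ) + (wbar m σ - w₀) := by abel
      calc ‖w m σ - w₀‖ = ‖(w m σ - wbar m σ) + (wbar m σ - w₀)‖ := by rw [← he]
        _ ≤ ‖w m σ - wbar m σ‖ + ‖wbar m σ - w₀‖ := norm_add_le _ _
        _ ≤ (1+γ) * ‖wbar m σ - w₀‖ := by nlinarith
        _ ≤ (1+γ) * (μ⁻¹ * ‖gs σ‖) :=
            mul_le_mul_of_nonneg_left hwb (by linarith)
    have hdes := descent_lemma hfdiff hL hflip w₀ (w m σ)
    have hsplit : ⟪gradient f w₀, w m σ - w₀⟫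
        = ⟪gradient f w₀, wbar m σ - w₀⟫ + ⟪gradient f w₀, w m σ - wbar m σ⟫ := by
      rw [← inner_add_right]
      congr 1
      abel
    have hwbw : ⟪gradient f w₀, wbar m σ - w₀⟫
        = -(μ⁻¹ * ⟪gradient f w₀, gs σ⟫)
          - μ⁻¹ * ⟪gradient f w₀, gradient (F m) (wbar m σ) - gradient (F m) w₀⟫ := by
      have h4 : wbar m σ - w₀ = μ⁻¹ • (μ • (wbar m σ - w₀)) := by
        rw [smul_smul, inv_mul_cancel₀ hμ.ne', one_smul]
      rw [h4, heq, real_inner_smul_right, inner_neg_right, inner_add_right]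
      ring
    have habs1 := abs_real_inner_le_norm (gradient f w₀)
      (gradient (F m) (wbar m σ) - gradient (F m) w₀)
    have habs2 := real_inner_le_norm (gradient f w₀) (w m σ - wbar m σ)
    have hV : (0:ℝ) ≤ ‖gradient f w₀‖ := norm_nonneg _
    have hGn : (0:ℝ) ≤ ‖gs σ‖ := norm_nonneg _
    -- bound the Δ inner product term
    have b1 : -(μ⁻¹ * ⟪gradient f w₀, gradient (F m) (wbar m σ) - gradient (F m) w₀⟫)
        ≤ μ⁻¹ * (‖gradient f w₀‖ * (L * (μ⁻¹ * ‖gs σ‖))) := by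
      have h5 : -⟪gradient f w₀, gradient (F m) (wbar m σ) - gradient (F m) w₀⟫
          ≤ ‖gradient f w₀‖ * ‖gradient (F m) (wbar m σ) - gradient (F m) w₀‖ := by
        have := abs_le.mp habs1
        linarith [this.1]
      have h6 : ‖gradient (F m) (wbar m σ) - gradient (F m) w₀‖ ≤ L * (μ⁻¹ * ‖gs σ‖) :=
        le_trans hΔle (mul_le_mul_of_nonneg_left hwb hL)
      have h7 : -⟪gradient f w₀, gradient (F m) (wbar m σ) - gradient (F m) w₀⟫
          ≤ ‖gradient f w₀‖ * (L * (μ⁻¹ * ‖gs σ‖)) :=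
        le_trans h5 (mul_le_mul_of_nonneg_left h6 hV)
      calc -(μ⁻¹ * ⟪gradient f w₀, gradient (F m) (wbar m σ) - gradient (F m) w₀⟫)
          = μ⁻¹ * (-⟪gradient f w₀, gradient (F m) (wbar m σ) - gradient (F m) w₀⟫) := by ring
        _ ≤ μ⁻¹ * (‖gradient f w₀‖ * (L * (μ⁻¹ * ‖gs σ‖))) :=
            mul_le_mul_of_nonneg_left h7 hμ'.le
    have b2 : ⟪gradient f w₀, w m σ - wbar m σ⟫
        ≤ ‖gradient f w₀‖ * (γ * (μ⁻¹ * ‖gs σ‖)) := by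
      have h8 : ‖w m σ - wbar m σ‖ ≤ γ * (μ⁻¹ * ‖gs σ‖) :=
        le_trans hwmwb (mul_le_mul_of_nonneg_left hwb hγ0)
      exact le_trans habs2 (mul_le_mul_of_nonneg_left h8 hV)
    have b3 : L * ‖w m σ - w₀‖^2 ≤ L * ((1+γ) * (μ⁻¹ * ‖gs σ‖))^2 := by
      apply mul_le_mul_of_nonneg_left _ hL
      nlinarith [norm_nonneg (w m σ - w₀), hwm]
    have b4 : ‖gradient f w₀‖ * ‖gs σ‖ ≤ (‖gradient f w₀‖^2 + ‖gs σ‖^2)/2 := by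
      nlinarith [sq_nonneg (‖gradient f w₀‖ - ‖gs σ‖)]
    rw [hsplit, hwbw] at hdes
    have hcoeff : (0:ℝ) ≤ L * μ⁻¹^2 + γ * μ⁻¹ := by positivity
    nlinarith [hdes, b1, b2, b3, b4, mul_le_mul_of_nonneg_left b4 hcoeff]
  -- aggregation
  have hwt : ∀ σ : Fin K → Fin N, (0:ℝ) ≤ ∏ i, p (σ i) :=
    fun σ => Finset.prod_nonneg (fun i _ => hp _)
  have hSw : ∑ σ : Fin K → Fin N, ∏ i, p (σ i) = 1 := weight_sum p hpsum
  -- expectation of inner product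
  have hSIP : ∑ σ : Fin K → Fin N, (∏ i, p (σ i)) * ⟪gradient f w₀, gs σ⟫
      = ‖gradient f w₀‖^2 := by
    have e : ∀ σ : Fin K → Fin N, ⟪gradient f w₀, gs σ⟫
        = (K:ℝ)⁻¹ * ∑ i, ⟪gradient f w₀, gradient (F (σ i)) w₀⟫ := by
      intro σ
      rw [hgs]
      simp only
      rw [real_inner_smul_right, inner_sum, one_div]
    simp_rw [e]
    have h1 : ∑ σ : Fin K → Fin N, (∏ i, p (σ i)) *
        ((K:ℝ)⁻¹ * ∑ i, ⟪gradient f w₀, gradient (F (σ i)) w₀⟫)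
        = (K:ℝ)⁻¹ * ∑ σ : Fin K → Fin N, (∏ i, p (σ i)) *
          (∑ i, ⟪gradient f w₀, gradient (F (σ i)) w₀⟫) := by
      rw [Finset.mul_sum]
      exact Finset.sum_congr rfl fun σ _ => by ring
    rw [h1, marginal_sum p hpsum (fun k => ⟪gradient f w₀, gradient (F k) w₀⟫),
      ← mul_assoc, inv_mul_cancel₀ hKpos.ne', one_mul]
    have h2 : ∑ k, p k * ⟪gradient f w₀, gradient (F k) w₀⟫
        = ‖gradient f w₀‖^2 := by
      have h2a : ⟪gradient f w₀, ∑ k, p k • gradient (F k) w₀⟫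
          = ∑ k, p k * ⟪gradient f w₀, gradient (F k) w₀⟫ := by
        rw [inner_sum]
        exact Finset.sum_congr rfl fun k _ => real_inner_smul_right _ _ _
      rw [← h2a, ← hgradf, real_inner_self_eq_norm_sq]
    rw [h2]
  -- expectation of squared norm
  have hSQ : ∑ σ : Fin K → Fin N, (∏ i, p (σ i)) * ‖gs σ‖^2
      ≤ B^2 * ‖gradient f w₀‖^2 := by
    have e : ∀ σ : Fin K → Fin N, ‖gs σ‖^2
        ≤ (K:ℝ)⁻¹ * ∑ i, ‖gradient (F (σ i)) w₀‖^2 := by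
      intro σ
      rw [hgs]
      simp only
      rw [norm_smul]
      have habs : ‖(1/(K:ℝ))‖ = (K:ℝ)⁻¹ := by
        rw [Real.norm_eq_abs, abs_of_pos (by positivity), one_div]
      rw [habs]
      have h2 : ‖∑ i, gradient (F (σ i)) w₀‖ ≤ ∑ i, ‖gradient (F (σ i)) w₀‖ :=
        norm_sum_le _ _
      have h3 : (∑ i, ‖gradient (F (σ i)) w₀‖)^2
          ≤ (K:ℝ) * ∑ i, ‖gradient (F (σ i)) w₀‖^2 := by
        have := sq_sum_le_card_mul_sum_sq
          (s := (Finset.univ : Finset (Fin K))) (f := fun i => ‖gradient (F (σ i)) w₀‖)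
        simpa using this
      have h4 : ‖∑ i, gradient (F (σ i)) w₀‖^2
          ≤ (K:ℝ) * ∑ i, ‖gradient (F (σ i)) w₀‖^2 := by
        nlinarith [norm_nonneg (∑ i, gradient (F (σ i)) w₀),
          Finset.sum_nonneg (fun i (_ : i ∈ Finset.univ) =>
            norm_nonneg (gradient (F (σ i)) w₀))]
      have h5 : ((K:ℝ)⁻¹ * ‖∑ i, gradient (F (σ i)) w₀‖)^2
          = (K:ℝ)⁻¹^2 * ‖∑ i, gradient (F (σ i)) w₀‖^2 := by ring
      rw [mul_pow]
      calc (K:ℝ)⁻¹^2 * ‖∑ i, gradient (F (σ i)) w₀‖^2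
          ≤ (K:ℝ)⁻¹^2 * ((K:ℝ) * ∑ i, ‖gradient (F (σ i)) w₀‖^2) :=
            mul_le_mul_of_nonneg_left h4 (by positivity)
        _ = (K:ℝ)⁻¹ * ∑ i, ‖gradient (F (σ i)) w₀‖^2 := by
            field_simp
    have step1 : ∑ σ : Fin K → Fin N, (∏ i, p (σ i)) * ‖gs σ‖^2
        ≤ ∑ σ : Fin K → Fin N, (∏ i, p (σ i)) *
          ((K:ℝ)⁻¹ * ∑ i, ‖gradient (F (σ i)) w₀‖^2) :=
      Finset.sum_le_sum fun σ _ => mul_le_mul_of_nonneg_left (e σ) (hwt σ)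
    have step2 : ∑ σ : Fin K → Fin N, (∏ i, p (σ i)) *
        ((K:ℝ)⁻¹ * ∑ i, ‖gradient (F (σ i)) w₀‖^2)
        = ∑ k, p k * ‖gradient (F k) w₀‖^2 := by
      have h1 : ∑ σ : Fin K → Fin N, (∏ i, p (σ i)) *
          ((K:ℝ)⁻¹ * ∑ i, ‖gradient (F (σ i)) w₀‖^2)
          = (K:ℝ)⁻¹ * ∑ σ : Fin K → Fin N, (∏ i, p (σ i)) *
            (∑ i, ‖gradient (F (σ i)) w₀‖^2) := by
        rw [Finset.mul_sum]
        exact Finset.sum_congr rfl fun σ _ => by ring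
      rw [h1, marginal_sum p hpsum (fun k => ‖gradient (F k) w₀‖^2),
        ← mul_assoc, inv_mul_cancel₀ hKpos.ne', one_mul]
    calc ∑ σ : Fin K → Fin N, (∏ i, p (σ i)) * ‖gs σ‖^2
        ≤ ∑ k, p k * ‖gradient (F k) w₀‖^2 := step2 ▸ step1
      _ ≤ B^2 * ‖gradient f w₀‖^2 := hdissim
  -- final combination
  have step1 : (∑ σ : Fin K → Fin N, ∑ j : Fin N, ((∏ i, p (σ i)) * p j) * f (w j σ))
      ≤ ∑ σ : Fin K → Fin N, (∏ i, p (σ i)) *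
        (f w₀ - μ⁻¹ * ⟪gradient f w₀, gs σ⟫
          + ((L * μ⁻¹^2 + γ * μ⁻¹)/2) * (‖gradient f w₀‖^2 + ‖gs σ‖^2)
          + (L * (1+γ)^2 * μ⁻¹^2) * ‖gs σ‖^2) := by
    calc (∑ σ : Fin K → Fin N, ∑ j : Fin N, ((∏ i, p (σ i)) * p j) * f (w j σ))
        ≤ ∑ σ : Fin K → Fin N, ∑ j : Fin N, ((∏ i, p (σ i)) * p j) *
          (f w₀ - μ⁻¹ * ⟪gradient f w₀, gs σ⟫
            + ((L * μ⁻¹^2 + γ * μ⁻¹)/2) * (‖gradient f w₀‖^2 + ‖gs σ‖^2)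
            + (L * (1+γ)^2 * μ⁻¹^2) * ‖gs σ‖^2) := by
          refine Finset.sum_le_sum fun σ _ => Finset.sum_le_sum fun j _ => ?_
          exact mul_le_mul_of_nonneg_left (key j σ) (mul_nonneg (hwt σ) (hp j))
      _ = ∑ σ : Fin K → Fin N, (∏ i, p (σ i)) *
          (f w₀ - μ⁻¹ * ⟪gradient f w₀, gs σ⟫
            + ((L * μ⁻¹^2 + γ * μ⁻¹)/2) * (‖gradient f w₀‖^2 + ‖gs σ‖^2)
            + (L * (1+γ)^2 * μ⁻¹^2) * ‖gs σ‖^2) := by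
          refine Finset.sum_congr rfl fun σ _ => ?_
          rw [← Finset.sum_mul]
          congr 1
          rw [← Finset.mul_sum, hpsum, mul_one]
  have hexp : ∑ σ : Fin K → Fin N, (∏ i, p (σ i)) *
      (f w₀ - μ⁻¹ * ⟪gradient f w₀, gs σ⟫
        + ((L * μ⁻¹^2 + γ * μ⁻¹)/2) * (‖gradient f w₀‖^2 + ‖gs σ‖^2)
        + (L * (1+γ)^2 * μ⁻¹^2) * ‖gs σ‖^2)
      = (f w₀ + ((L * μ⁻¹^2 + γ * μ⁻¹)/2) * ‖gradient f w₀‖^2)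
          * (∑ σ : Fin K → Fin N, ∏ i, p (σ i))
        - μ⁻¹ * (∑ σ : Fin K → Fin N, (∏ i, p (σ i)) * ⟪gradient f w₀, gs σ⟫)
        + ((L * μ⁻¹^2 + γ * μ⁻¹)/2 + L * (1+γ)^2 * μ⁻¹^2)
          * (∑ σ : Fin K → Fin N, (∏ i, p (σ i)) * ‖gs σ‖^2) := by
    rw [Finset.mul_sum, Finset.mul_sum, Finset.mul_sum, ← Finset.sum_sub_distrib,
      ← Finset.sum_add_distrib]
    exact Finset.sum_congr rfl fun σ _ => by ring
  have hcoeffQ : (0:ℝ) ≤ (L * μ⁻¹^2 + γ * μ⁻¹)/2 + L * (1+γ)^2 * μ⁻¹^2 := by positivity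
  have hρle : ρ ≤ μ⁻¹ - ((L * μ⁻¹^2 + γ * μ⁻¹)/2) * (1 + B^2)
      - L * (1+γ)^2 * μ⁻¹^2 * B^2 := by
    have hkey : μ⁻¹ - ((L * μ⁻¹^2 + γ * μ⁻¹)/2) * (1 + B^2)
        - L * (1+γ)^2 * μ⁻¹^2 * B^2
        - ((2 - 3 * γ) / (2 * μ) - (2 * L * (1 + γ) ^ 2 + 3 * L) / (2 * μ ^ 2) -
          (B ^ 2 - 1) * ((L * (1 + γ) ^ 2 + L) / μ ^ 2 + γ / μ))
        = (B^2/2) * (γ * μ⁻¹ + L * μ⁻¹^2) := by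
      field_simp
      ring
    have hpos2 : (0:ℝ) ≤ (B^2/2) * (γ * μ⁻¹ + L * μ⁻¹^2) := by positivity
    rw [hρ]
    linarith
  rw [hexp, hSw, hSIP, mul_one] at step1
  have step3 : (f w₀ + ((L * μ⁻¹^2 + γ * μ⁻¹)/2) * ‖gradient f w₀‖^2)
        - μ⁻¹ * ‖gradient f w₀‖^2
        + ((L * μ⁻¹^2 + γ * μ⁻¹)/2 + L * (1+γ)^2 * μ⁻¹^2)
          * (∑ σ : Fin K → Fin N, (∏ i, p (σ i)) * ‖gs σ‖^2)
      ≤ f w₀ - ρ * ‖gradient f w₀‖^2 := by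
    have h9 := mul_le_mul_of_nonneg_left hSQ hcoeffQ
    have h10 := mul_le_mul_of_nonneg_right hρle (sq_nonneg ‖gradient f w₀‖)
    nlinarith [h9, h10]
  linarith
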